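/- Let X be a real-valued random variable with integrable characteristic function φ ∈ L¹(ℝ). Then the law of X has a continuous density f_X given by the inversion formula f_X(x) = (1/2π) ∫_{-∞}^{∞} e^{-iθx} φ(θ) dθ for all x ∈ ℝ. -/

import Mathlib

open MeasureTheory Complex FourierTransform Real Filter Set Metric
open scoped Topology


noncomputable def levySchwartz (f : ℝ → ℂ) (h1 : ContDiff ℝ ((⊤:ℕ∞):WithTop ℕ∞) f) (h2 : HasCompactSupport f) :
    SchwartzMap ℝ ℂ where
  toFun := f
  smooth' := h1
  decay' := by
    intro k n
    have hc : Continuous fun x : ℝ => ‖x‖ ^ k * ‖iteratedFDeriv ℝ n f x‖ :=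
      ((continuous_norm).pow k).mul (h1.continuous_iteratedFDeriv (by exact_mod_cast le_top)).norm
    have hs : HasCompactSupport fun x : ℝ => ‖x‖ ^ k * ‖iteratedFDeriv ℝ n f x‖ :=
      ((h2.iteratedFDeriv n).norm).mul_left
    obtain ⟨C, hC⟩ := hc.bounded_above_of_compact_support hs
    exact ⟨C, fun x => (le_abs_self _).trans ((Real.norm_eq_abs _ ▸ hC x))⟩

lemma levy_formula_eq_fourier (φ : ℝ → ℂ) (x : ℝ) :
    (1 / (2 * Real.pi) : ℂ) * ∫ θ : ℝ, Complex.exp (-(Complex.I * θ * x)) * φ θ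
      = 𝓕 (fun t : ℝ => φ (2 * Real.pi * t)) x := by
  have h2π : (2 * Real.pi) ≠ 0 := by positivity
  rw [Real.fourier_real_eq_integral_exp_smul]
  have := MeasureTheory.Measure.integral_comp_mul_left
    (fun θ : ℝ => Complex.exp (-(Complex.I * θ * x)) * φ θ) (2 * Real.pi)
  have h1 : (∫ t : ℝ, Complex.exp (-(Complex.I * (2 * Real.pi * t) * x)) * φ (2 * Real.pi * t))
      = |(2 * Real.pi)⁻¹| • ∫ θ : ℝ, Complex.exp (-(Complex.I * θ * x)) * φ θ := by
    simpa using this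
  have h2 : ∀ t : ℝ, Complex.exp (↑(-2 * Real.pi * t * x) * Complex.I) • φ (2 * Real.pi * t)
      = Complex.exp (-(Complex.I * (2 * Real.pi * t) * x)) * φ (2 * Real.pi * t) := by
    intro t
    rw [smul_eq_mul]
    congr 1
    push_cast
    ring_nf
  simp_rw [h2, h1]
  rw [abs_of_pos (by positivity)]
  rw [Complex.real_smul]
  push_cast
  rw [one_div]


lemma levy_conj_phi (μ : Measure ℝ) (φ : ℝ → ℂ)
    (hφ : ∀ θ : ℝ, φ θ = ∫ x : ℝ, Complex.exp (Complex.I * θ * x) ∂μ) (θ : ℝ) :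
    (starRingEnd ℂ) (φ θ) = φ (-θ) := by
  rw [hφ θ, hφ (-θ), ← integral_conj]
  congr 1
  funext x
  rw [← Complex.exp_conj]
  congr 1
  simp only [map_mul, Complex.conj_I, Complex.conj_ofReal]
  push_cast
  ring

lemma levy_real (μ : Measure ℝ) (φ : ℝ → ℂ)
    (hφ : ∀ θ : ℝ, φ θ = ∫ x : ℝ, Complex.exp (Complex.I * θ * x) ∂μ) (x : ℝ) :
    (starRingEnd ℂ) (𝓕 (fun t : ℝ => φ (2 * Real.pi * t)) x)
      = 𝓕 (fun t : ℝ => φ (2 * Real.pi * t)) x := by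
  rw [Real.fourier_real_eq_integral_exp_smul, ← integral_conj]
  have key : ∀ t : ℝ, (starRingEnd ℂ) (Complex.exp (↑(-2 * Real.pi * t * x) * Complex.I)
        • φ (2 * Real.pi * t))
      = (fun s : ℝ => Complex.exp (↑(-2 * Real.pi * s * x) * Complex.I) • φ (2 * Real.pi * s))
        (-t) := by
    intro t
    simp only [smul_eq_mul, map_mul, ← Complex.exp_conj]
    have h1 := levy_conj_phi μ φ hφ (2 * Real.pi * t)
    rw [h1]
    congr 2
    · simp only [map_mul, Complex.conj_I, Complex.conj_ofReal]
      push_cast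
      ring
    · ring
  simp_rw [key]
  rw [MeasureTheory.integral_neg_eq_self
    (fun s : ℝ => Complex.exp (↑(-2 * Real.pi * s * x) * Complex.I) • φ (2 * Real.pi * s)) volume]


lemma levy_key (μ : Measure ℝ) [IsProbabilityMeasure μ] (φ : ℝ → ℂ)
    (hφ : ∀ θ : ℝ, φ θ = ∫ x : ℝ, Complex.exp (Complex.I * θ * x) ∂μ)
    (hint : Integrable φ) (g : SchwartzMap ℝ ℂ) :
    ∫ x, g x ∂μ = ∫ x, g x * 𝓕 (fun t : ℝ => φ (2 * Real.pi * t)) x := by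
  set ψ : ℝ → ℂ := fun t => φ (2 * Real.pi * t) with hψdef
  have h2π : (2 * Real.pi) ≠ 0 := by positivity
  have hψint : Integrable ψ := hint.comp_mul_left' h2π
  set h : SchwartzMap ℝ ℂ := (FourierTransform.fourierCLE ℂ (SchwartzMap ℝ ℂ)).symm g with hdef
  have hh : ⇑h = 𝓕⁻ ⇑g := by rw [hdef, FourierTransform.fourierCLE_symm_apply, SchwartzMap.fourierInv_coe]
  have hFg_int : Integrable (𝓕 ⇑g) := by
    rw [← SchwartzMap.fourier_coe]
    exact SchwartzMap.integrable _
  have hinv : ∀ x : ℝ, 𝓕 (⇑h) x = g x := by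
    intro x
    rw [hh, Continuous.fourier_fourierInv_eq g.continuous g.integrable hFg_int]
  -- Fubini on the μ side
  have hcont_exp : Continuous fun p : ℝ × ℝ =>
      Complex.exp (↑(-2 * Real.pi * p.2 * p.1) * Complex.I) := by fun_prop
  have hprod : Integrable (Function.uncurry fun x t =>
      Complex.exp (↑(-2 * Real.pi * t * x) * Complex.I) • h t) (μ.prod volume) := by
    have hmeas : AEStronglyMeasurable (fun p : ℝ × ℝ =>
        Complex.exp (↑(-2 * Real.pi * p.2 * p.1) * Complex.I) • h p.2) (μ.prod volume) :=
      (hcont_exp.smul (h.continuous.comp continuous_snd)).aestronglyMeasurable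
    rw [Function.uncurry_def]
    rw [integrable_prod_iff hmeas]
    constructor
    · refine Filter.Eventually.of_forall fun x => ?_
      simp only [smul_eq_mul]
      refine Integrable.bdd_mul (c := 1) h.integrable ?_ (Filter.Eventually.of_forall fun t => ?_)
      · exact (Complex.continuous_exp.comp (by fun_prop)).aestronglyMeasurable
      · rw [Complex.norm_exp_ofReal_mul_I]
    · simp only [norm_smul, Complex.norm_exp_ofReal_mul_I, one_mul]
      exact integrable_const _
  have step1 : ∫ x, g x ∂μ
      = ∫ x, ∫ t, Complex.exp (↑(-2 * Real.pi * t * x) * Complex.I) • h t ∂volume ∂μ := by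
    congr 1
    funext x
    rw [← hinv x, Real.fourier_real_eq_integral_exp_smul]
  have step2 : (∫ x, ∫ t, Complex.exp (↑(-2 * Real.pi * t * x) * Complex.I) • h t ∂volume ∂μ)
      = ∫ t, ∫ x, Complex.exp (↑(-2 * Real.pi * t * x) * Complex.I) • h t ∂μ ∂volume :=
    MeasureTheory.integral_integral_swap hprod
  have step3 : ∀ t : ℝ, (∫ x, Complex.exp (↑(-2 * Real.pi * t * x) * Complex.I) • h t ∂μ)
      = φ (-(2 * Real.pi * t)) * h t := by
    intro t
    rw [integral_smul_const, smul_eq_mul]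
    congr 1
    rw [hφ (-(2 * Real.pi * t))]
    congr 1
    funext x
    congr 1
    push_cast
    ring
  have step4 : (∫ t : ℝ, φ (-(2 * Real.pi * t)) * h t) = ∫ t : ℝ, ψ t * 𝓕 (⇑g) t := by
    rw [← MeasureTheory.integral_neg_eq_self (fun t : ℝ => ψ t * 𝓕 (⇑g) t) volume]
    congr 1
    funext t
    have h1 : ψ (-t) = φ (-(2 * Real.pi * t)) := by
      simp only [hψdef]
      congr 1
      ring
    have h2 : 𝓕 (⇑g) (-t) = h t := by
      rw [hh, fourierInv_eq_fourier_neg]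
    rw [h1, h2]
  -- Fubini on the volume side
  have hprod2 : Integrable (Function.uncurry fun x t =>
      g x * (Complex.exp (↑(-2 * Real.pi * t * x) * Complex.I) • ψ t))
      (volume.prod volume) := by
    have hmeas : AEStronglyMeasurable (fun p : ℝ × ℝ =>
        g p.1 * (Complex.exp (↑(-2 * Real.pi * p.2 * p.1) * Complex.I) • ψ p.2))
        ((volume : Measure ℝ).prod volume) := by
      have h1 : AEStronglyMeasurable (fun p : ℝ × ℝ =>
          g p.1 * Complex.exp (↑(-2 * Real.pi * p.2 * p.1) * Complex.I))
          ((volume : Measure ℝ).prod volume) :=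
        ((g.continuous.comp continuous_fst).mul hcont_exp).aestronglyMeasurable
      have h2 : AEStronglyMeasurable (fun p : ℝ × ℝ => ψ p.2)
          ((volume : Measure ℝ).prod volume) := hψint.1.comp_snd
      exact (h1.mul h2).congr (Filter.Eventually.of_forall fun p => by simp [smul_eq_mul, mul_assoc])
    refine Integrable.mono' (g.integrable.norm.mul_prod hψint.norm) hmeas ?_
    refine Filter.Eventually.of_forall fun p => le_of_eq ?_
    calc ‖Function.uncurry (fun x t =>
          g x * (Complex.exp (↑(-2 * Real.pi * t * x) * Complex.I) • ψ t)) p‖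
        = ‖g p.1‖ * (‖Complex.exp (↑(-2 * Real.pi * p.2 * p.1) * Complex.I)‖ * ‖ψ p.2‖) := by
          rw [Function.uncurry_apply_pair, norm_mul, norm_smul]
      _ = ‖g p.1‖ * ‖ψ p.2‖ := by
          simp [Complex.norm_exp]
  have step5 : (∫ t : ℝ, ψ t * 𝓕 (⇑g) t) = ∫ x, g x * 𝓕 ψ x := by
    have lhs : ∀ x : ℝ, g x * 𝓕 ψ x
        = ∫ t, g x * (Complex.exp (↑(-2 * Real.pi * t * x) * Complex.I) • ψ t) := by
      intro x
      rw [Real.fourier_real_eq_integral_exp_smul]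
      exact (integral_const_mul _ _).symm
    have rhs : ∀ t : ℝ, ψ t * 𝓕 (⇑g) t
        = ∫ x, g x * (Complex.exp (↑(-2 * Real.pi * t * x) * Complex.I) • ψ t) := by
      intro t
      rw [Real.fourier_real_eq_integral_exp_smul]
      simp_rw [smul_eq_mul]
      rw [mul_comm (ψ t), ← integral_mul_const]
      congr 1
      funext x
      have hc : (↑(-2 * Real.pi * x * t) : ℂ) = (↑(-2 * Real.pi * t * x) : ℂ) := by
        push_cast; ring
      rw [hc]
      ring
    simp_rw [lhs, rhs]
    exact (MeasureTheory.integral_integral_swap hprod2).symm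
  rw [step1, step2]
  simp_rw [step3]
  rw [step4, step5]

noncomputable def levyBump (c : ℝ) {R : ℝ} (hR0 : 0 ≤ R) (n : ℕ) : ContDiffBump c where
  rIn := R + 1 / (n + 1)
  rOut := R + 2 / (n + 1)
  rIn_pos := by
    have h1 : (0:ℝ) < 1 / (n + 1) := by positivity
    linarith
  rIn_lt_rOut := by
    have h1 : (0:ℝ) < (n:ℝ) + 1 := by positivity
    gcongr
    norm_num

lemma levyBump_rIn (c : ℝ) {R : ℝ} (hR0 : 0 ≤ R) (n : ℕ) :
    (levyBump c hR0 n).rIn = R + 1 / (n + 1) := rfl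

lemma levyBump_rOut (c : ℝ) {R : ℝ} (hR0 : 0 ≤ R) (n : ℕ) :
    (levyBump c hR0 n).rOut = R + 2 / (n + 1) := rfl

noncomputable def levyBumpSchwartz {c : ℝ} (B : ContDiffBump c) : SchwartzMap ℝ ℂ :=
  levySchwartz (fun x => ((B x : ℝ) : ℂ))
    (Complex.ofRealCLM.contDiff.comp (B.contDiff (n := ⊤)))
    (B.hasCompactSupport.comp_left Complex.ofReal_zero)

lemma levyBumpSchwartz_apply {c : ℝ} (B : ContDiffBump c) (x : ℝ) :
    levyBumpSchwartz B x = ((B x : ℝ) : ℂ) := rfl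


lemma levy_interval (μ : Measure ℝ) [IsProbabilityMeasure μ] (φ : ℝ → ℂ)
    (hφ : ∀ θ : ℝ, φ θ = ∫ x : ℝ, Complex.exp (Complex.I * θ * x) ∂μ)
    (hint : Integrable φ) {a b : ℝ} (hab : a ≤ b) :
    (μ (Icc a b)).toReal
      = ∫ x in Icc a b, (𝓕 (fun t : ℝ => φ (2 * Real.pi * t)) x).re := by
  set ψ : ℝ → ℂ := fun t => φ (2 * Real.pi * t) with hψdef
  have h2π : (2 * Real.pi) ≠ 0 := by positivity
  have hψint : Integrable ψ := hint.comp_mul_left' h2π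
  set F : ℝ → ℝ := fun x => (𝓕 ψ x).re with hFdef
  have hFψ : Continuous (𝓕 ψ) :=
    VectorFourier.fourierIntegral_continuous Real.continuous_fourierChar continuous_inner hψint
  have hFcont : Continuous F := Complex.continuous_re.comp hFψ
  have hre : ∀ x : ℝ, ((F x : ℝ) : ℂ) = 𝓕 ψ x := fun x =>
    Complex.conj_eq_iff_re.mp (levy_real μ φ hφ x)
  set c : ℝ := (a + b) / 2 with hc
  set R : ℝ := (b - a) / 2 with hR
  have hR0 : 0 ≤ R := by rw [hR]; linarith
  have hIcc : Icc a b = closedBall c R := by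
    have h1 : c - R = a := by rw [hc, hR]; ring
    have h2 : c + R = b := by rw [hc, hR]; ring
    rw [Real.closedBall_eq_Icc, h1, h2]
  -- the bump functions
  set bump : ℕ → ContDiffBump c := fun n => levyBump c hR0 n with hbumpdef
  have hbump_rIn : ∀ n : ℕ, (bump n).rIn = R + 1 / (n + 1) := fun n => rfl
  have hbump_rOut : ∀ n : ℕ, (bump n).rOut = R + 2 / (n + 1) := fun n => rfl
  -- key identity for the bumps
  have hkey : ∀ n : ℕ, ∫ x, (bump n) x ∂μ = ∫ x, (bump n) x * F x := by
    intro n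
    have h := levy_key μ φ hφ hint (levyBumpSchwartz (bump n))
    simp_rw [levyBumpSchwartz_apply] at h
    have hL : ∫ x, ((bump n) x : ℂ) ∂μ = ((∫ x, (bump n) x ∂μ : ℝ) : ℂ) := integral_ofReal
    have hR' : ∀ x : ℝ, ((bump n) x : ℂ) * 𝓕 ψ x = (((bump n) x * F x : ℝ) : ℂ) := by
      intro x
      rw [← hre x]
      push_cast
      ring
    rw [hL] at h
    simp_rw [← hψdef, hR'] at h
    have h2 : (∫ x : ℝ, (((bump n) x * F x : ℝ) : ℂ))
        = ((∫ x : ℝ, (bump n) x * F x : ℝ) : ℂ) := integral_ofReal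
    rw [h2] at h
    exact_mod_cast h
  -- pointwise convergence of bumps to the indicator of Icc a b
  have hptwise : ∀ x : ℝ, Tendsto (fun n : ℕ => (bump n) x) atTop
      (𝓝 ((Icc a b).indicator (fun _ => (1:ℝ)) x)) := by
    intro x
    by_cases hx : x ∈ Icc a b
    · have hdist : dist x c ≤ R := by rwa [hIcc, mem_closedBall] at hx
      have hval : ∀ n : ℕ, (bump n) x = 1 := by
        intro n
        apply (bump n).one_of_mem_closedBall
        rw [mem_closedBall, hbump_rIn]
        have : (0:ℝ) ≤ 1 / (n + 1) := by positivity
        linarith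
      rw [indicator_of_mem hx]
      simp_rw [hval]
      exact tendsto_const_nhds
    · have hdist : R < dist x c := by
        rw [hIcc] at hx
        simpa [mem_closedBall, not_le] using hx
      have h0 : Tendsto (fun n : ℕ => 2 / ((n:ℝ) + 1)) atTop (𝓝 0) := by
        have := tendsto_one_div_add_atTop_nhds_zero_nat.const_mul (2:ℝ)
        simpa [mul_one_div, div_eq_mul_inv] using this
      have hev : ∀ᶠ n : ℕ in atTop, 2 / ((n:ℝ) + 1) < dist x c - R :=
        h0.eventually_lt_const (by linarith)
      have hval : ∀ᶠ n : ℕ in atTop, (bump n) x = 0 := by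
        filter_upwards [hev] with n hn
        have : x ∉ Function.support (bump n) := by
          rw [(bump n).support_eq, mem_ball, hbump_rOut]
          push_neg
          linarith
        exact Function.notMem_support.mp this
      rw [indicator_of_notMem hx]
      exact Tendsto.congr' (hval.mono fun n hn => hn.symm) tendsto_const_nhds
  -- limit on the μ side
  have limit1 : Tendsto (fun n : ℕ => ∫ x, (bump n) x ∂μ) atTop
      (𝓝 ((μ (Icc a b)).toReal)) := by
    have := tendsto_integral_of_dominated_convergence (μ := μ)
      (F := fun n x => (bump n) x) (f := (Icc a b).indicator (fun _ => (1:ℝ)))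
      (bound := fun _ => 1)
      (fun n => (bump n).continuous.aestronglyMeasurable)
      (integrable_const 1)
      (fun n => Filter.Eventually.of_forall fun x => by
        show ‖(bump n) x‖ ≤ (1:ℝ)
        rw [Real.norm_eq_abs, _root_.abs_of_nonneg (bump n).nonneg]
        exact (bump n).le_one)
      (Filter.Eventually.of_forall hptwise)
    have heq : ∫ x, (Icc a b).indicator (fun _ => (1:ℝ)) x ∂μ = (μ (Icc a b)).toReal := by
      have : (Icc a b).indicator (fun _ => (1:ℝ)) = (Icc a b).indicator 1 := rfl
      rw [this, integral_indicator_one measurableSet_Icc, measureReal_def]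
    rwa [heq] at this
  -- limit on the volume side
  have hbound_int : Integrable ((closedBall c (R + 2)).indicator fun x => ‖F x‖) := by
    exact ((hFcont.norm.continuousOn).integrableOn_compact
      (isCompact_closedBall c (R + 2))).integrable_indicator measurableSet_closedBall
  have limit2 : Tendsto (fun n : ℕ => ∫ x, (bump n) x * F x) atTop
      (𝓝 (∫ x in Icc a b, F x)) := by
    have key := tendsto_integral_of_dominated_convergence (μ := (volume : Measure ℝ))
      (F := fun n x => (bump n) x * F x)
      (f := fun x => (Icc a b).indicator (fun _ => (1:ℝ)) x * F x)
      (bound := (closedBall c (R + 2)).indicator fun x => ‖F x‖)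
      (fun n => ((bump n).continuous.mul hFcont).aestronglyMeasurable)
      hbound_int
      (fun n => Filter.Eventually.of_forall fun x => by
        show ‖(bump n) x * F x‖ ≤ (closedBall c (R + 2)).indicator (fun x => ‖F x‖) x
        by_cases hx : x ∈ closedBall c (R + 2)
        · rw [indicator_of_mem hx]
          have h1 : |(bump n) x| ≤ 1 := by
            rw [_root_.abs_of_nonneg (bump n).nonneg]
            exact (bump n).le_one
          calc ‖(bump n) x * F x‖ = |(bump n) x| * ‖F x‖ := by
                rw [norm_mul, Real.norm_eq_abs]
            _ ≤ 1 * ‖F x‖ := mul_le_mul_of_nonneg_right h1 (norm_nonneg _)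
            _ = ‖F x‖ := one_mul _
        · rw [indicator_of_notMem hx]
          have hdist : R + 2 < dist x c := by simpa [mem_closedBall, not_le] using hx
          have hzero : (bump n) x = 0 := by
            apply Function.notMem_support.mp
            rw [(bump n).support_eq, mem_ball, hbump_rOut]
            push_neg
            have h2 : 2 / ((n:ℝ) + 1) ≤ 2 := by
              rw [div_le_iff₀ (by positivity : (0:ℝ) < (n:ℝ)+1)]
              nlinarith [Nat.cast_nonneg (α := ℝ) n]
            linarith
          rw [hzero, zero_mul, norm_zero])
      (Filter.Eventually.of_forall fun x => (hptwise x).mul_const (F x))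
    have heq : (∫ x, (Icc a b).indicator (fun _ => (1:ℝ)) x * F x)
        = ∫ x in Icc a b, F x := by
      have h1 : (fun x => (Icc a b).indicator (fun _ => (1:ℝ)) x * F x)
          = (Icc a b).indicator F := by
        funext x
        by_cases hx : x ∈ Icc a b
        · simp [indicator_of_mem hx]
        · simp [indicator_of_notMem hx]
      rw [h1, integral_indicator measurableSet_Icc]
    rwa [heq] at key
  exact tendsto_nhds_unique (limit1.congr hkey) limit2

lemma levy_nonneg (μ : Measure ℝ) [IsProbabilityMeasure μ] (φ : ℝ → ℂ)
    (hφ : ∀ θ : ℝ, φ θ = ∫ x : ℝ, Complex.exp (Complex.I * θ * x) ∂μ)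
    (hint : Integrable φ) (x : ℝ) :
    0 ≤ (𝓕 (fun t : ℝ => φ (2 * Real.pi * t)) x).re := by
  set ψ : ℝ → ℂ := fun t => φ (2 * Real.pi * t) with hψdef
  have h2π : (2 * Real.pi) ≠ 0 := by positivity
  have hψint : Integrable ψ := hint.comp_mul_left' h2π
  set F : ℝ → ℝ := fun y => (𝓕 ψ y).re with hFdef
  have hFcont : Continuous F := Complex.continuous_re.comp
    (VectorFourier.fourierIntegral_continuous Real.continuous_fourierChar continuous_inner hψint)
  by_contra hneg
  push_neg at hneg
  have hopen : IsOpen (F ⁻¹' Iio (F x / 2)) := (isOpen_Iio).preimage hFcont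
  have hmem : x ∈ F ⁻¹' Iio (F x / 2) := by
    simp only [mem_preimage, mem_Iio]
    linarith
  obtain ⟨δ, hδ, hball⟩ := Metric.isOpen_iff.mp hopen x hmem
  set a : ℝ := x - δ / 2 with ha
  set b : ℝ := x + δ / 2 with hb
  have hab : a ≤ b := by rw [ha, hb]; linarith
  have hsub : Icc a b ⊆ F ⁻¹' Iio (F x / 2) := by
    intro y hy
    apply hball
    rw [mem_ball, Real.dist_eq]
    rw [ha, hb] at hy
    rw [abs_sub_lt_iff]
    constructor <;> [linarith [hy.2]; linarith [hy.1]]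
  have h1 := levy_interval μ φ hφ hint hab
  have hFint : IntegrableOn F (Icc a b) :=
    hFcont.continuousOn.integrableOn_compact isCompact_Icc
  have h2 : ∫ y in Icc a b, F y ≤ ∫ _y in Icc a b, (F x / 2) := by
    apply setIntegral_mono_on hFint (integrableOn_const measure_Icc_lt_top.ne)
      measurableSet_Icc
    intro y hy
    exact le_of_lt (hsub hy)
  have h3 : (∫ _y in Icc a b, (F x / 2)) = δ * (F x / 2) := by
    rw [setIntegral_const, measureReal_def, Real.volume_Icc, smul_eq_mul]
    congr 1
    rw [ENNReal.toReal_ofReal (by rw [ha, hb]; linarith)]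
    rw [ha, hb]; ring
  have h4 : (0:ℝ) ≤ (μ (Icc a b)).toReal := ENNReal.toReal_nonneg
  have h5 : δ * (F x / 2) < 0 := mul_neg_of_pos_of_neg hδ (by linarith)
  rw [h1] at h4
  linarith [h2.trans_eq h3]

lemma levy_measure (μ : Measure ℝ) [IsProbabilityMeasure μ] (φ : ℝ → ℂ)
    (hφ : ∀ θ : ℝ, φ θ = ∫ x : ℝ, Complex.exp (Complex.I * θ * x) ∂μ)
    (hint : Integrable φ) :
    μ = volume.withDensity
      (fun x => ENNReal.ofReal ((𝓕 (fun t : ℝ => φ (2 * Real.pi * t)) x).re)) := by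
  set ψ : ℝ → ℂ := fun t => φ (2 * Real.pi * t) with hψdef
  have h2π : (2 * Real.pi) ≠ 0 := by positivity
  have hψint : Integrable ψ := hint.comp_mul_left' h2π
  set F : ℝ → ℝ := fun y => (𝓕 ψ y).re with hFdef
  have hFcont : Continuous F := Complex.continuous_re.comp
    (VectorFourier.fourierIntegral_continuous Real.continuous_fourierChar continuous_inner hψint)
  set ν : Measure ℝ := volume.withDensity (fun x => ENNReal.ofReal (F x)) with hνdef
  have hIcc : ∀ a b : ℝ, a ≤ b → ν (Icc a b) = μ (Icc a b) := by
    intro a b hab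
    have hFint : IntegrableOn F (Icc a b) :=
      hFcont.continuousOn.integrableOn_compact isCompact_Icc
    have hae : 0 ≤ᶠ[ae (volume.restrict (Icc a b))] F :=
      Filter.Eventually.of_forall fun y => levy_nonneg μ φ hφ hint y
    calc ν (Icc a b) = ∫⁻ y in Icc a b, ENNReal.ofReal (F y) :=
          withDensity_apply _ measurableSet_Icc
      _ = ENNReal.ofReal (∫ y in Icc a b, F y) :=
          (ofReal_integral_eq_lintegral_ofReal hFint hae).symm
      _ = ENNReal.ofReal ((μ (Icc a b)).toReal) := by
          rw [← levy_interval μ φ hφ hint hab]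
      _ = μ (Icc a b) := ENNReal.ofReal_toReal (measure_ne_top μ _)
  have hsing : ∀ a : ℝ, μ {a} = 0 := by
    intro a
    have h1 := hIcc a a le_rfl
    rw [Icc_self] at h1
    rw [← h1]
    exact (withDensity_absolutelyContinuous volume _) (Real.volume_singleton)
  have hνsing : ∀ a : ℝ, ν {a} = 0 := fun a =>
    (withDensity_absolutelyContinuous volume _) (Real.volume_singleton)
  refine Measure.ext_of_Ioc' μ ν (fun a b _ => measure_ne_top μ _) ?_
  intro a b hlt
  have hsubset : Icc a b ⊆ {a} ∪ Ioc a b := by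
    intro y hy
    rcases eq_or_ne y a with h | h
    · exact Or.inl (by simp [h])
    · exact Or.inr ⟨lt_of_le_of_ne hy.1 (Ne.symm h), hy.2⟩
  have hμ : μ (Ioc a b) = μ (Icc a b) := by
    refine le_antisymm (measure_mono Ioc_subset_Icc_self) ?_
    calc μ (Icc a b) ≤ μ ({a} ∪ Ioc a b) := measure_mono hsubset
      _ ≤ μ {a} + μ (Ioc a b) := measure_union_le _ _
      _ = μ (Ioc a b) := by rw [hsing a, zero_add]
  have hν : ν (Ioc a b) = ν (Icc a b) := by
    refine le_antisymm (measure_mono Ioc_subset_Icc_self) ?_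
    calc ν (Icc a b) ≤ ν ({a} ∪ Ioc a b) := measure_mono hsubset
      _ ≤ ν {a} + ν (Ioc a b) := measure_union_le _ _
      _ = ν (Ioc a b) := by rw [hνsing a, zero_add]
  rw [hμ, hν, hIcc a b hlt.le]

/- STATEMENT 1 (Lévy inversion): if the characteristic function φ of a real random
variable X is integrable, then the law of X has a continuous density f given by
f(x) = (1/2π) ∫ e^{-iθx} φ(θ) dθ. -/
theorem stmt1 {Ω : Type*} [MeasurableSpace Ω] (P : Measure Ω) [IsProbabilityMeasure P]
    (X : Ω → ℝ) (hX : Measurable X)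
    (φ : ℝ → ℂ) (hφdef : ∀ θ : ℝ, φ θ = ∫ ω, Complex.exp (Complex.I * θ * X ω) ∂P)
    (hint : Integrable φ) :
    ∃ f : ℝ → ℝ, Continuous f ∧ (∀ x, 0 ≤ f x) ∧
      Measure.map X P = volume.withDensity (fun x => ENNReal.ofReal (f x)) ∧
      ∀ x : ℝ, (f x : ℂ) =
        (1 / (2 * Real.pi)) * ∫ θ : ℝ, Complex.exp (-(Complex.I * θ * x)) * φ θ := by
  have hXae : AEMeasurable X P := hX.aemeasurable
  set μ : Measure ℝ := Measure.map X P with hμdef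
  haveI : IsProbabilityMeasure μ := Measure.isProbabilityMeasure_map hXae
  have hφμ : ∀ θ : ℝ, φ θ = ∫ x : ℝ, Complex.exp (Complex.I * θ * x) ∂μ := by
    intro θ
    rw [hφdef θ]
    have hcont : Continuous fun x : ℝ => Complex.exp (Complex.I * θ * x) := by fun_prop
    exact (integral_map hXae hcont.aestronglyMeasurable).symm
  set ψ : ℝ → ℂ := fun t => φ (2 * Real.pi * t) with hψdef
  have h2π : (2 * Real.pi) ≠ 0 := by positivity
  have hψint : Integrable ψ := hint.comp_mul_left' h2π
  refine ⟨fun x => (𝓕 ψ x).re, ?_, ?_, ?_, ?_⟩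
  · exact Complex.continuous_re.comp
      (VectorFourier.fourierIntegral_continuous Real.continuous_fourierChar continuous_inner
        hψint)
  · exact fun x => levy_nonneg μ φ hφμ hint x
  · exact levy_measure μ φ hφμ hint
  · intro x
    have h1 : ((𝓕 ψ x).re : ℂ) = 𝓕 ψ x := Complex.conj_eq_iff_re.mp (levy_real μ φ hφμ x)
    rw [h1, ← levy_formula_eq_fourier φ x]
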